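/- Let X = AS be an ICA model in ℝⁿ where each Sᵢ is symmetrically distributed with E|Sᵢ| = 1, and suppose σ_min(A) > 0. Then the centroid body satisfies A·B₁ⁿ ⊆ ΓX, and in particular ΓX contains the Euclidean ball of radius σ_min(A)/√n centered at the origin; moreover ΓX ⊆ A·[−1,1]ⁿ, so ΓX is contained in the Euclidean ball of radius √n·σ_max(A). -/

import Mathlib

open MeasureTheory ProbabilityTheory Matrix
open scoped RealInnerProductSpace ENNReal

private lemma ica_lower {Ω : Type*} [MeasureSpace Ω] [IsProbabilityMeasure (ℙ : Measure Ω)]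
    {n : ℕ} (f : Fin n → Ω → ℝ) (hm : ∀ j, Measurable (f j))
    (hindep : iIndepFun f ℙ)
    (hsym : ∀ j, Measure.map (f j) ℙ = Measure.map (fun ω => -f j ω) ℙ)
    (hint : ∀ j, Integrable (f j) ℙ)
    (c : Fin n → ℝ) (i : Fin n) :
    |c i| * ∫ ω, |f i ω| ≤ ∫ ω, |∑ j, c j * f j ω| := by
  classical
  set g : Fin n → Ω → ℝ := fun j ω => c j * f j ω with hg
  have hgm : ∀ j, Measurable (g j) := fun j => (hm j).const_mul (c j)
  have hgi : ∀ j, Integrable (g j) ℙ := fun j => (hint j).const_mul (c j)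
  have hgindep : iIndepFun g ℙ :=
    hindep.comp (fun j x => c j * x) (fun j => measurable_id.const_mul (c j))
  set T : Ω → ℝ := g i with hT
  set R : Ω → ℝ := fun ω => ∑ j ∈ Finset.univ.erase i, g j ω with hRdef
  have hRfun : (∑ j ∈ Finset.univ.erase i, g j) = R :=
    funext fun ω => Finset.sum_apply ω _ g
  have hRm : Measurable R := Finset.measurable_sum _ fun j _ => hgm j
  have hRint : Integrable R ℙ := integrable_finset_sum _ fun j _ => hgi j
  have hTR : IndepFun T R ℙ := by
    have h := (hgindep.indepFun_finsetSum_of_notMem hgm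
      (Finset.notMem_erase i Finset.univ)).symm
    rwa [hRfun] at h
  have hTm : Measurable T := hgm i
  have hmapT : Measure.map T ℙ = Measure.map (fun ω => -T ω) ℙ := by
    have hcm : Measurable fun x : ℝ => c i * x := measurable_id.const_mul (c i)
    have h1 := Measure.map_map (μ := ℙ) hcm (hm i)
    have h2 := Measure.map_map (μ := ℙ) hcm ((hm i).neg)
    simp only [Function.comp_def] at h1 h2
    calc Measure.map T ℙ = (Measure.map (f i) ℙ).map (fun x => c i * x) := h1.symm
      _ = (Measure.map (fun ω => -f i ω) ℙ).map (fun x => c i * x) := by rw [hsym i]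
      _ = Measure.map (fun ω => c i * -f i ω) ℙ := h2
      _ = Measure.map (fun ω => -T ω) ℙ := by simp only [mul_neg, hT, hg]
  have hTRneg : IndepFun (fun ω => -T ω) R ℙ := by
    have := hTR.neg_left
    simpa [Pi.neg_def] using this
  have e1 := (indepFun_iff_map_prod_eq_prod_map_map hTm.aemeasurable hRm.aemeasurable).mp hTR
  have e2 := (indepFun_iff_map_prod_eq_prod_map_map hTm.neg.aemeasurable hRm.aemeasurable).mp hTRneg
  have emap : Measure.map (fun ω => (T ω, R ω)) ℙ = Measure.map (fun ω => (-T ω, R ω)) ℙ := by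
    rw [e1, hmapT]; exact e2.symm
  have habs1 : Integrable (fun ω => |T ω + R ω|) ℙ := ((hgi i).add hRint).abs
  have habs2 : Integrable (fun ω => |T ω - R ω|) ℙ := ((hgi i).sub hRint).abs
  have hii : ∫ ω, |T ω + R ω| = ∫ ω, |T ω - R ω| := by
    have c1 : Continuous fun p : ℝ × ℝ => |p.1 + p.2| := (continuous_fst.add continuous_snd).abs
    have m1 : AEMeasurable (fun ω => (T ω, R ω)) ℙ := (hTm.prodMk hRm).aemeasurable
    have m2 : AEMeasurable (fun ω => (-T ω, R ω)) ℙ := (hTm.neg.prodMk hRm).aemeasurable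
    calc ∫ ω, |T ω + R ω|
        = ∫ p : ℝ × ℝ, |p.1 + p.2| ∂(Measure.map (fun ω => (T ω, R ω)) ℙ) :=
          (integral_map m1 c1.aestronglyMeasurable).symm
      _ = ∫ p : ℝ × ℝ, |p.1 + p.2| ∂(Measure.map (fun ω => (-T ω, R ω)) ℙ) := by rw [emap]
      _ = ∫ ω, |-T ω + R ω| := integral_map m2 c1.aestronglyMeasurable
      _ = ∫ ω, |T ω - R ω| := by simp_rw [neg_add_eq_sub, abs_sub_comm]
  have hTint : ∫ ω, |T ω| = |c i| * ∫ ω, |f i ω| := by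
    simp_rw [hT, hg, abs_mul]
    exact integral_const_mul _ _
  have key : 2 * ∫ ω, |T ω| ≤ 2 * ∫ ω, |T ω + R ω| := by
    have hpt : ∀ ω, 2 * |T ω| ≤ |T ω + R ω| + |T ω - R ω| := by
      intro ω
      have h := abs_add_le (T ω + R ω) (T ω - R ω)
      have h2 : T ω + R ω + (T ω - R ω) = 2 * T ω := by ring
      rw [h2] at h
      have h3 : |2 * T ω| = 2 * |T ω| := by rw [abs_mul, abs_two]
      linarith
    calc 2 * ∫ ω, |T ω| = ∫ ω, 2 * |T ω| := (integral_const_mul 2 _).symm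
      _ ≤ ∫ ω, (|T ω + R ω| + |T ω - R ω|) :=
          integral_mono ((hgi i).abs.const_mul 2) (habs1.add habs2) hpt
      _ = (∫ ω, |T ω + R ω|) + ∫ ω, |T ω - R ω| := integral_add habs1 habs2
      _ = 2 * ∫ ω, |T ω + R ω| := by rw [← hii]; ring
  have hfinal : ∫ ω, |T ω| ≤ ∫ ω, |T ω + R ω| := by linarith
  have hTRsum : (fun ω => |T ω + R ω|) = fun ω => |∑ j, c j * f j ω| := by
    funext ω
    rw [hT, hRdef, hg]
    rw [Finset.add_sum_erase Finset.univ (fun j => c j * f j ω) (Finset.mem_univ i)]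
  calc |c i| * ∫ ω, |f i ω| = ∫ ω, |T ω| := hTint.symm
    _ ≤ ∫ ω, |T ω + R ω| := hfinal
    _ = ∫ ω, |∑ j, c j * f j ω| := by rw [hTRsum]

private lemma ica_upper {Ω : Type*} [MeasureSpace Ω] [IsProbabilityMeasure (ℙ : Measure Ω)]
    {n : ℕ} (f : Fin n → Ω → ℝ)
    (hint : ∀ j, Integrable (f j) ℙ) (hnorm : ∀ j, ∫ ω, |f j ω| = 1)
    (c : Fin n → ℝ) :
    ∫ ω, |∑ j, c j * f j ω| ≤ ∑ j, |c j| := by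
  have hsint : Integrable (fun ω => ∑ j, c j * f j ω) ℙ :=
    integrable_finset_sum _ fun j _ => (hint j).const_mul _
  have h1 : Integrable (fun ω => ∑ j, |c j| * |f j ω|) ℙ :=
    integrable_finset_sum _ fun j _ => ((hint j).abs).const_mul _
  have h2 : ∀ ω, |∑ j, c j * f j ω| ≤ ∑ j, |c j| * |f j ω| := fun ω =>
    (Finset.abs_sum_le_sum_abs _ _).trans
      (le_of_eq (Finset.sum_congr rfl fun j _ => abs_mul _ _))
  calc ∫ ω, |∑ j, c j * f j ω| ≤ ∫ ω, ∑ j, |c j| * |f j ω| :=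
        integral_mono hsint.abs h1 h2
    _ = ∑ j, ∫ ω, |c j| * |f j ω| := integral_finset_sum _ fun j _ => ((hint j).abs).const_mul _
    _ = ∑ j, |c j| := by
        refine Finset.sum_congr rfl fun j _ => ?_
        rw [integral_const_mul, hnorm j, mul_one]

private lemma ica_sum_swap {n : ℕ} (A : Matrix (Fin n) (Fin n) ℝ) (u s : Fin n → ℝ) :
    ∑ i, (∑ j, A i j * s j) * u i = ∑ j, (∑ k, u k * A k j) * s j := by
  simp_rw [Finset.sum_mul]
  rw [Finset.sum_comm]
  exact Finset.sum_congr rfl fun j _ => Finset.sum_congr rfl fun k _ => by ring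

private lemma ica_inner_eq {n : ℕ} (x u : EuclideanSpace ℝ (Fin n)) :
    ⟪x, u⟫ = ∑ i, x i * u i := by
  simp [PiLp.inner_apply, RCLike.inner_apply, conj_trivial]
  exact Finset.sum_congr rfl fun _ _ => mul_comm _ _

private lemma ica_l1_le_sqrt {n : ℕ} (x : EuclideanSpace ℝ (Fin n)) :
    ∑ i, |x i| ≤ Real.sqrt n * ‖x‖ := by
  have h1 : (∑ i, |x i|) ^ 2 ≤ (n : ℝ) * ∑ i, |x i| ^ 2 := by
    simpa using sq_sum_le_card_mul_sum_sq (s := Finset.univ) (f := fun i : Fin n => |x i|)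
  have h2 : ‖x‖ = Real.sqrt (∑ i, |x i| ^ 2) := by
    rw [EuclideanSpace.norm_eq]
    simp [Real.norm_eq_abs]
  calc ∑ i, |x i| = Real.sqrt ((∑ i, |x i|) ^ 2) := by
        rw [Real.sqrt_sq (Finset.sum_nonneg fun i _ => abs_nonneg _)]
    _ ≤ Real.sqrt ((n : ℝ) * ∑ i, |x i| ^ 2) := Real.sqrt_le_sqrt h1
    _ = Real.sqrt n * ‖x‖ := by
        rw [Real.sqrt_mul (Nat.cast_nonneg n), h2]

private lemma ica_sigmaMin_le {n : ℕ} (A : Matrix (Fin n) (Fin n) ℝ)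
    (x : EuclideanSpace ℝ (Fin n)) :
    (⨅ z : Metric.sphere (0 : EuclideanSpace ℝ (Fin n)) 1,
      ‖(Matrix.toEuclideanCLM (𝕜 := ℝ) A) (z : EuclideanSpace ℝ (Fin n))‖) * ‖x‖ ≤
      ‖Matrix.toEuclideanLin A x‖ := by
  by_cases hx : x = 0
  · simp [hx]
  · have hnx : (0 : ℝ) < ‖x‖ := norm_pos_iff.mpr hx
    have hz : (‖x‖⁻¹ • x) ∈ Metric.sphere (0 : EuclideanSpace ℝ (Fin n)) 1 := by
      simp [norm_smul, abs_of_pos (inv_pos.mpr hnx), inv_mul_cancel₀ hnx.ne']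
    have hbdd : BddBelow (Set.range fun z : Metric.sphere (0 : EuclideanSpace ℝ (Fin n)) 1 =>
        ‖(Matrix.toEuclideanCLM (𝕜 := ℝ) A) (z : EuclideanSpace ℝ (Fin n))‖) := by
      refine ⟨0, ?_⟩
      rintro r ⟨z, rfl⟩
      exact norm_nonneg _
    have hle := ciInf_le hbdd (⟨_, hz⟩ : Metric.sphere (0 : EuclideanSpace ℝ (Fin n)) 1)
    have heq : ‖(Matrix.toEuclideanCLM (𝕜 := ℝ) A) (‖x‖⁻¹ • x)‖
        = ‖x‖⁻¹ * ‖Matrix.toEuclideanLin A x‖ := by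
      rw [_root_.map_smul, norm_smul, Real.norm_eq_abs, abs_of_pos (inv_pos.mpr hnx)]
      rfl
    rw [heq] at hle
    calc _ * ‖x‖ ≤ (‖x‖⁻¹ * ‖Matrix.toEuclideanLin A x‖) * ‖x‖ :=
          mul_le_mul_of_nonneg_right hle hnx.le
      _ = ‖Matrix.toEuclideanLin A x‖ := by field_simp

/-- The centroid body of a distribution `μ` on `ℝⁿ`: the (compact, convex) set whose support
function is `u ↦ E|⟨u,X⟩|`, realized as the intersection of the corresponding halfspaces. -/
noncomputable def centroidBody {n : ℕ} (μ : Measure (EuclideanSpace ℝ (Fin n))) :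
    Set (EuclideanSpace ℝ (Fin n)) :=
  {y | ∀ u : EuclideanSpace ℝ (Fin n), ⟪y, u⟫ ≤ ∫ x, |⟪x, u⟫| ∂μ}

/-- The largest singular value (spectral norm) of a square real matrix. -/
noncomputable def sigmaMax {n : ℕ} (M : Matrix (Fin n) (Fin n) ℝ) : ℝ :=
  ‖(Matrix.toEuclideanCLM (𝕜 := ℝ) M : EuclideanSpace ℝ (Fin n) →L[ℝ] EuclideanSpace ℝ (Fin n))‖

/-- The smallest singular value of a square real matrix. -/
noncomputable def sigmaMin {n : ℕ} (M : Matrix (Fin n) (Fin n) ℝ) : ℝ :=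
  ⨅ x : Metric.sphere (0 : EuclideanSpace ℝ (Fin n)) 1,
    ‖(Matrix.toEuclideanCLM (𝕜 := ℝ) M) (x : EuclideanSpace ℝ (Fin n))‖

/-- in an ICA model `X = AS` with symmetric components and `E|Sᵢ| = 1`, assuming
`σ_min(A) > 0`, the centroid body satisfies `A·B₁ⁿ ⊆ ΓX ⊆ A·[−1,1]ⁿ`; in particular `ΓX`
contains the Euclidean ball of radius `σ_min(A)/√n` and is contained in the Euclidean ball of
radius `√n·σ_max(A)`. -/
theorem centroidBody_of_ica_model_inner_outer_bounds
    {n : ℕ} {Ω : Type*} [MeasureSpace Ω] [IsProbabilityMeasure (ℙ : Measure Ω)]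
    (S : Ω → EuclideanSpace ℝ (Fin n)) (hS : Measurable S)
    (hindep : iIndepFun (fun i ω => S ω i) ℙ)
    (hsym : ∀ i, Measure.map (fun ω => S ω i) ℙ = Measure.map (fun ω => -S ω i) ℙ)
    (hint : ∀ i, Integrable (fun ω => |S ω i|) ℙ)
    (hnorm : ∀ i, ∫ ω, |S ω i| = 1)
    (A : Matrix (Fin n) (Fin n) ℝ) (hA : IsUnit A) (hσ : 0 < sigmaMin A)
    (X : Ω → EuclideanSpace ℝ (Fin n))
    (hX : X = fun ω => Matrix.toEuclideanLin A (S ω)) :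
    (⇑(Matrix.toEuclideanLin A)) '' {x : EuclideanSpace ℝ (Fin n) | ∑ i, |x i| ≤ 1} ⊆
        centroidBody (Measure.map X ℙ) ∧
    Metric.closedBall (0 : EuclideanSpace ℝ (Fin n)) (sigmaMin A / Real.sqrt n) ⊆
        centroidBody (Measure.map X ℙ) ∧
    centroidBody (Measure.map X ℙ) ⊆
        (⇑(Matrix.toEuclideanLin A)) '' {x : EuclideanSpace ℝ (Fin n) | ∀ i, |x i| ≤ 1} ∧
    centroidBody (Measure.map X ℙ) ⊆
        Metric.closedBall (0 : EuclideanSpace ℝ (Fin n)) (Real.sqrt n * sigmaMax A) := by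
  classical
  have hSm : ∀ j, Measurable fun ω => S ω j := fun j => (measurable_pi_apply j).comp ((WithLp.measurable_ofLp 2 _).comp hS)
  have hSint : ∀ j, Integrable (fun ω => S ω j) ℙ := fun j =>
    (integrable_norm_iff ((hSm j).aestronglyMeasurable)).mp
      (by simpa [Real.norm_eq_abs] using hint j)
  have hXm : Measurable X := by
    rw [hX]; exact (LinearMap.continuous_of_finiteDimensional _).measurable.comp hS
  -- support function rewrite
  have hrw : ∀ u : EuclideanSpace ℝ (Fin n),
      (∫ x, |⟪x, u⟫| ∂(Measure.map X ℙ)) = ∫ ω, |∑ j, (∑ k, u k * A k j) * S ω j| := by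
    intro u
    rw [integral_map hXm.aemeasurable
      ((continuous_id.inner continuous_const).abs).aestronglyMeasurable]
    congr 1
    funext ω
    congr 1
    calc ⟪X ω, u⟫ = ∑ i, (X ω) i * u i := ica_inner_eq _ _
      _ = ∑ i, (∑ j, A i j * S ω j) * u i := by rw [hX]; rfl
      _ = ∑ j, (∑ k, u k * A k j) * S ω j := ica_sum_swap A u (fun j => S ω j)
  have hlow : ∀ (c : Fin n → ℝ) (i : Fin n), |c i| ≤ ∫ ω, |∑ j, c j * S ω j| := by
    intro c i
    have h := ica_lower (fun j ω => S ω j) hSm hindep hsym hSint c i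
    rwa [hnorm i, mul_one] at h
  have hup : ∀ c : Fin n → ℝ, ∫ ω, |∑ j, c j * S ω j| ≤ ∑ j, |c j| := fun c =>
    ica_upper (fun j ω => S ω j) hSint hnorm c
  have hpos : ∀ c : Fin n → ℝ, (0:ℝ) ≤ ∫ ω, |∑ j, c j * S ω j| := fun c =>
    integral_nonneg fun ω => abs_nonneg _
  -- matrix inverse facts
  have hdet : IsUnit A.det := (Matrix.isUnit_iff_isUnit_det A).mp hA
  have hAA : A * A⁻¹ = 1 := Matrix.mul_nonsing_inv A hdet
  have hA'A : A⁻¹ * A = 1 := Matrix.nonsing_inv_mul A hdet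
  have hABx : ∀ z : EuclideanSpace ℝ (Fin n),
      Matrix.toEuclideanLin A (Matrix.toEuclideanLin A⁻¹ z) = z := by
    intro z
    rw [Matrix.toEuclideanLin_apply, Matrix.toEuclideanLin_apply]
    simp [Matrix.mulVec_mulVec, hAA]
  -- Part 1
  have part1 : (⇑(Matrix.toEuclideanLin A)) '' {x : EuclideanSpace ℝ (Fin n) | ∑ i, |x i| ≤ 1} ⊆
      centroidBody (Measure.map X ℙ) := by
    rintro y ⟨x, hx, rfl⟩
    simp only [centroidBody, Set.mem_setOf_eq]
    intro u
    rw [hrw u]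
    set c : Fin n → ℝ := fun j => ∑ k, u k * A k j with hc
    have h1 : ⟪Matrix.toEuclideanLin A x, u⟫ = ∑ j, c j * x j := by
      rw [ica_inner_eq]
      exact ica_sum_swap A u x
    rw [h1]
    have hx' : ∑ i, |x i| ≤ 1 := hx
    calc ∑ j, c j * x j ≤ ∑ j, |x j| * |c j| := by
          refine Finset.sum_le_sum fun j _ => ?_
          calc c j * x j ≤ |c j * x j| := le_abs_self _
            _ = |x j| * |c j| := by rw [abs_mul, mul_comm]
      _ ≤ ∑ j, |x j| * (∫ ω, |∑ k, c k * S ω k|) :=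
          Finset.sum_le_sum fun j _ => mul_le_mul_of_nonneg_left (hlow c j) (abs_nonneg _)
      _ = (∑ j, |x j|) * (∫ ω, |∑ k, c k * S ω k|) := by rw [Finset.sum_mul]
      _ ≤ 1 * (∫ ω, |∑ k, c k * S ω k|) := mul_le_mul_of_nonneg_right hx' (hpos c)
      _ = ∫ ω, |∑ k, c k * S ω k| := one_mul _
  -- Part 3
  have part3 : centroidBody (Measure.map X ℙ) ⊆
      (⇑(Matrix.toEuclideanLin A)) '' {x : EuclideanSpace ℝ (Fin n) | ∀ i, |x i| ≤ 1} := by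
    intro y hy
    simp only [centroidBody, Set.mem_setOf_eq] at hy
    have hy' : ∀ u : EuclideanSpace ℝ (Fin n),
        ⟪y, u⟫ ≤ ∫ ω, |∑ j, (∑ k, u k * A k j) * S ω j| := by
      intro u; rw [← hrw u]; exact hy u
    refine ⟨Matrix.toEuclideanLin A⁻¹ y, fun i => ?_, hABx y⟩
    have habs : ∀ v : EuclideanSpace ℝ (Fin n),
        (∀ j, |∑ k, v k * A k j| = if i = j then (1:ℝ) else 0) → ⟪y, v⟫ ≤ 1 := by
      intro v hv
      refine (hy' v).trans ((hup _).trans (le_of_eq ?_))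
      calc ∑ j, |∑ k, v k * A k j| = ∑ j, if i = j then (1:ℝ) else 0 :=
            Finset.sum_congr rfl fun j _ => hv j
        _ = 1 := by simp
    set u : EuclideanSpace ℝ (Fin n) := WithLp.toLp 2 (fun j => A⁻¹ i j) with hu
    have hcu : ∀ j, (∑ k, u k * A k j) = if i = j then (1:ℝ) else 0 := by
      intro j
      have h0 : (∑ k, u k * A k j) = ∑ k, A⁻¹ i k * A k j := rfl
      rw [h0, ← Matrix.mul_apply, hA'A, Matrix.one_apply]
    have hviu : ∀ j, |∑ k, u k * A k j| = if i = j then (1:ℝ) else 0 := by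
      intro j; rw [hcu j]; split <;> norm_num
    have hvin : ∀ j, |∑ k, (-u) k * A k j| = if i = j then (1:ℝ) else 0 := by
      intro j
      have : (∑ k, (-u) k * A k j) = -(∑ k, u k * A k j) := by
        simp [neg_mul]
      rw [this, abs_neg]
      exact hviu j
    have h2 : ⟪y, u⟫ = Matrix.toEuclideanLin A⁻¹ y i := by
      rw [ica_inner_eq]
      show ∑ j, y j * u j = ∑ j, A⁻¹ i j * y j
      exact Finset.sum_congr rfl fun j _ => mul_comm _ _
    have h3 : ⟪y, -u⟫ = -(Matrix.toEuclideanLin A⁻¹ y i) := by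
      rw [inner_neg_right, h2]
    have hup1 : Matrix.toEuclideanLin A⁻¹ y i ≤ 1 := by
      rw [← h2]; exact habs u hviu
    have hup2 : -(Matrix.toEuclideanLin A⁻¹ y i) ≤ 1 := by
      rw [← h3]; exact habs (-u) hvin
    exact abs_le.mpr ⟨by linarith, hup1⟩
  -- Part 2
  have part2 : Metric.closedBall (0 : EuclideanSpace ℝ (Fin n)) (sigmaMin A / Real.sqrt n) ⊆
      centroidBody (Measure.map X ℙ) := by
    intro y hy
    rcases Nat.eq_zero_or_pos n with h0 | hn
    · exfalso
      subst h0
      have hE : IsEmpty (Metric.sphere (0 : EuclideanSpace ℝ (Fin 0)) 1) := by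
        constructor
        rintro ⟨z, hz⟩
        have hz0 : z = (0 : EuclideanSpace ℝ (Fin 0)) := by ext i; exact i.elim0
        rw [hz0] at hz
        simp at hz
      have h00 : sigmaMin A = 0 := by
        rw [sigmaMin, iInf_of_isEmpty, Real.sInf_empty]
      rw [h00] at hσ
      exact lt_irrefl _ hσ
    · apply part1
      set x : EuclideanSpace ℝ (Fin n) := Matrix.toEuclideanLin A⁻¹ y with hxdef
      refine ⟨x, ?_, hABx y⟩
      have hsq : (0:ℝ) < Real.sqrt n := Real.sqrt_pos.mpr (by exact_mod_cast hn)
      have hyn : ‖y‖ ≤ sigmaMin A / Real.sqrt n := by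
        have := Metric.mem_closedBall.mp hy
        rwa [dist_zero_right] at this
      have hmin : sigmaMin A * ‖x‖ ≤ ‖y‖ := by
        have h := ica_sigmaMin_le A x
        rw [hxdef, hABx y] at h
        exact h
      have hx1 : ‖x‖ ≤ 1 / Real.sqrt n := by
        have h1 : sigmaMin A * ‖x‖ ≤ sigmaMin A * (1 / Real.sqrt n) := by
          calc sigmaMin A * ‖x‖ ≤ ‖y‖ := hmin
            _ ≤ sigmaMin A / Real.sqrt n := hyn
            _ = sigmaMin A * (1 / Real.sqrt n) := by ring
        exact le_of_mul_le_mul_left h1 hσ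
      show ∑ i, |x i| ≤ 1
      calc ∑ i, |x i| ≤ Real.sqrt n * ‖x‖ := ica_l1_le_sqrt x
        _ ≤ Real.sqrt n * (1 / Real.sqrt n) := mul_le_mul_of_nonneg_left hx1 hsq.le
        _ = 1 := by field_simp
  -- Part 4
  have part4 : centroidBody (Measure.map X ℙ) ⊆
      Metric.closedBall (0 : EuclideanSpace ℝ (Fin n)) (Real.sqrt n * sigmaMax A) := by
    intro y hy
    obtain ⟨x, hx, rfl⟩ := part3 hy
    rw [Metric.mem_closedBall, dist_zero_right]
    have hx' : ∀ i, |x i| ≤ 1 := hx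
    have h1 : ‖Matrix.toEuclideanLin A x‖ ≤ sigmaMax A * ‖x‖ :=
      (Matrix.toEuclideanCLM (𝕜 := ℝ) A).le_opNorm x
    have h2 : ‖x‖ ≤ Real.sqrt n := by
      rw [EuclideanSpace.norm_eq]
      have hsum : ∑ i, ‖x i‖ ^ 2 ≤ (n : ℝ) := by
        calc ∑ i, ‖x i‖ ^ 2 ≤ ∑ _i : Fin n, (1:ℝ) := by
              refine Finset.sum_le_sum fun i _ => ?_
              have := hx' i
              rw [Real.norm_eq_abs]
              nlinarith [abs_nonneg (x i)]
          _ = n := by simp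
      exact Real.sqrt_le_sqrt hsum
    calc ‖Matrix.toEuclideanLin A x‖ ≤ sigmaMax A * ‖x‖ := h1
      _ ≤ sigmaMax A * Real.sqrt n := mul_le_mul_of_nonneg_left h2 (norm_nonneg _)
      _ = Real.sqrt n * sigmaMax A := mul_comm _ _
  exact ⟨part1, part2, part3, part4⟩
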